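/- Let r and s be integers with s ≥ 3 and r ≥ s+1, let τ > 1, and suppose that all four first-order partial derivatives of φ vanish at the point x_τ = (α_τ, β_τ, γ_τ, δ_τ) (which lies in the interior of K). Then φ(x_τ) = ln τ + ((s−1)/s)·(rs−r−s)·ln(rs−r−s − s·α_τ). -/

import Mathlib

noncomputable section

/-- `g(x) = x·ln x` (note `g(0) = 0` automatically, since `Real.log 0 = 0`). -/
def xlog (x : ℝ) : ℝ := x * Real.log x

/-- `h(r,s) = (r−2)² + 2(s−2)(r−1)(r−2) + (1/2)(s−2)(s−3)(r−1)²`. -/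
def hRS (r s : ℝ) : ℝ :=
  (r - 2) ^ 2 + 2 * (s - 2) * (r - 1) * (r - 2) + (1 / 2) * (s - 2) * (s - 3) * (r - 1) ^ 2

/-- `κ₁ = (r−1)^{s−2}(r−2)²(s−1)(s−2)^{2(s−2)}` (real exponents, via `rpow`). -/
def kap1 (r s : ℝ) : ℝ := (r - 1) ^ (s - 2) * (r - 2) ^ 2 * (s - 1) * (s - 2) ^ (2 * (s - 2))

/-- `κ₂ = 2h(r,s)/(r−2)²`. -/
def kap2 (r s : ℝ) : ℝ := 2 * hRS r s / (r - 2) ^ 2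

/-- `κ₃ = (rs−r−s)²/h(r,s)`. -/
def kap3 (r s : ℝ) : ℝ := (r * s - r - s) ^ 2 / hRS r s

/-- `κ₄ = (r−3)/(r−2)`. -/
def kap4 (r : ℝ) : ℝ := (r - 3) / (r - 2)

/-- The function `φ` of four real variables `(α,β,γ,δ)` (with parameters `r,s`). -/
def phiRS (r s α β γ δ : ℝ) : ℝ :=
  xlog (1 - α - β) + 2 * (s - 1) * xlog α + ((s - 1) / s) * xlog (r * s - r - s - s * α)
    - xlog (β - γ) - xlog δ - 2 * xlog γ - 2 * xlog (α - β - δ)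
    - xlog ((s - 3) * α + β + δ) - xlog (1 - α - β - γ)
    + α * Real.log (kap1 r s) + β * Real.log (kap2 r s) + γ * Real.log (kap3 r s)
    + δ * Real.log (kap4 r)

/-- Membership in the domain `K = {(α,β,γ,δ) : 0 ≤ γ ≤ β, 0 ≤ δ ≤ α−β, α+β+γ ≤ 1}`. -/
def memK (α β γ δ : ℝ) : Prop :=
  0 ≤ γ ∧ γ ≤ β ∧ 0 ≤ δ ∧ δ ≤ α - β ∧ α + β + γ ≤ 1

/-- `L(r,s) = ln(r−1) + ln(s−1) + ((s−1)(rs−r−s)/s)·ln(1 − s/(rs−r))`;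
the hypothesis `r > ρ(s)` means `r ≥ s+1` and `L(r,s) > 0`. -/
def Lfun (r s : ℝ) : ℝ :=
  Real.log (r - 1) + Real.log (s - 1) +
    ((s - 1) * (r * s - r - s) / s) * Real.log (1 - s / (r * s - r))

end

noncomputable section

/-- `D_τ = (τ−1)² + 2κ₃τ − κ₃`. -/
def DT (r s τ : ℝ) : ℝ := (τ - 1) ^ 2 + 2 * kap3 r s * τ - kap3 r s

/-- `p_τ = ((τ−1)² + κ₃(τ−1))/D_τ`. -/
def pT (r s τ : ℝ) : ℝ := ((τ - 1) ^ 2 + kap3 r s * (τ - 1)) / DT r s τ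

/-- `q_τ = κ₄·τ·(τ−1)²/(κ₂·D_τ)`. -/
def qT (r s τ : ℝ) : ℝ := kap4 r * τ * (τ - 1) ^ 2 / (kap2 r s * DT r s τ)

/-- `N_τ = p_τ + q_τ + ((s−3)/(2κ₄))q_τ + √((s−2)/κ₄·q_τ(p_τ+q_τ) + (s−3)²/(4κ₄²)·q_τ²)`. -/
def NT (r s τ : ℝ) : ℝ :=
  pT r s τ + qT r s τ + ((s - 3) / (2 * kap4 r)) * qT r s τ +
    Real.sqrt (((s - 2) / kap4 r) * qT r s τ * (pT r s τ + qT r s τ) +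
      ((s - 3) ^ 2 / (4 * (kap4 r) ^ 2)) * (qT r s τ) ^ 2)

/-- `α_τ = N_τ/(1+N_τ)`. -/
def alphaT (r s τ : ℝ) : ℝ := NT r s τ / (1 + NT r s τ)

/-- `β_τ = p_τ(1−α_τ)`. -/
def betaT (r s τ : ℝ) : ℝ := pT r s τ * (1 - alphaT r s τ)

/-- `γ_τ = (κ₃(τ−1)/D_τ)(1−α_τ)`. -/
def gammaT (r s τ : ℝ) : ℝ := (kap3 r s * (τ - 1) / DT r s τ) * (1 - alphaT r s τ)

/-- `δ_τ = q_τ(1−α_τ)`. -/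
def deltaT (r s τ : ℝ) : ℝ := qT r s τ * (1 - alphaT r s τ)

end

/-- For integers `s ≥ 3` and `r ≥ s+1` and real `τ > 1`, if all four first-order partial
derivatives of `φ` vanish at `x_τ = (α_τ,β_τ,γ_τ,δ_τ)`, then
`φ(x_τ) = ln τ + ((s−1)/s)(rs−r−s)·ln(rs−r−s−sα_τ)`. -/
private lemma hxa (f : ℝ → ℝ) (c d a : ℝ) (hf : ∀ x, f x = c * x + d) (h : f a ≠ 0) :
    HasDerivAt (fun x => xlog (f x)) ((Real.log (f a) + 1) * c) a := by
  have h1 : HasDerivAt f c a := by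
    have h2 : HasDerivAt (fun x : ℝ => c * x + d) c a := by
      simpa using ((hasDerivAt_id a).const_mul c).add_const d
    exact h2.congr_of_eventuallyEq (Filter.Eventually.of_forall fun x => hf x)
  have h2 := (Real.hasDerivAt_mul_log h).comp a h1
  exact h2

theorem auxPhi (r s τ A B G D : ℝ) (hs0 : s ≠ 0)
    (pos1 : 0 < A) (pos2 : 0 < 1 - A - B) (pos3 : 0 < r * s - r - s - s * A)
    (pos4 : 0 < B - G) (pos5 : 0 < D) (pos6 : 0 < G) (pos7 : 0 < A - B - D)
    (pos8 : 0 < (s - 3) * A + B + D) (pos9 : 0 < 1 - A - B - G)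
    (hτ0 : 0 < τ) (hrel : 1 - A - B = τ * (1 - A - B - G))
    (h1 : deriv (fun x => phiRS r s x B G D) A = 0)
    (h2 : deriv (fun x => phiRS r s A x G D) B = 0)
    (h3 : deriv (fun x => phiRS r s A B x D) G = 0)
    (h4 : deriv (fun x => phiRS r s A B G x) D = 0) :
    phiRS r s A B G D =
      Real.log τ + (s - 1) / s * (r * s - r - s) * Real.log (r * s - r - s - s * A) := by
  have hd1 : HasDerivAt (fun x => phiRS r s x B G D)
      ((Real.log (1 - A - B) + 1) * (-1)
        + 2 * (s - 1) * ((Real.log A + 1) * 1)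
        + (s - 1) / s * ((Real.log (r * s - r - s - s * A) + 1) * (-s))
        - 0 - 0 - 0
        - 2 * ((Real.log (A - B - D) + 1) * 1)
        - (Real.log ((s - 3) * A + B + D) + 1) * (s - 3)
        - (Real.log (1 - A - B - G) + 1) * (-1)
        + Real.log (kap1 r s) + 0 + 0 + 0) A := by
    exact ((((((((((((hxa (fun x => 1 - x - B) (-1) (1 - B) A (fun x => by ring) pos2.ne').add
      ((hxa (fun x => x) 1 0 A (fun x => by ring) pos1.ne').const_mul (2 * (s - 1)))).add
      ((hxa (fun x => r * s - r - s - s * x) (-s) (r * s - r - s) A (fun x => by ring)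
        pos3.ne').const_mul ((s - 1) / s))).sub
      (hasDerivAt_const A (xlog (B - G)))).sub
      (hasDerivAt_const A (xlog D))).sub
      (hasDerivAt_const A (2 * xlog G))).sub
      ((hxa (fun x => x - B - D) 1 (-B - D) A (fun x => by ring) pos7.ne').const_mul 2)).sub
      (hxa (fun x => (s - 3) * x + B + D) (s - 3) (B + D) A (fun x => by ring) pos8.ne')).sub
      (hxa (fun x => 1 - x - B - G) (-1) (1 - B - G) A (fun x => by ring) pos9.ne')).add
      (hasDerivAt_mul_const (Real.log (kap1 r s)))).add
      (hasDerivAt_const A (B * Real.log (kap2 r s)))).add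
      (hasDerivAt_const A (G * Real.log (kap3 r s)))).add
      (hasDerivAt_const A (D * Real.log (kap4 r)))
  have e1 := hd1.deriv.symm.trans h1
  have hd2 : HasDerivAt (fun x => phiRS r s A x G D)
      ((Real.log (1 - A - B) + 1) * (-1)
        + 0 + 0
        - (Real.log (B - G) + 1) * 1
        - 0 - 0
        - 2 * ((Real.log (A - B - D) + 1) * (-1))
        - (Real.log ((s - 3) * A + B + D) + 1) * 1
        - (Real.log (1 - A - B - G) + 1) * (-1)
        + 0 + Real.log (kap2 r s) + 0 + 0) B := by
    exact ((((((((((((hxa (fun x => 1 - A - x) (-1) (1 - A) B (fun x => by ring) pos2.ne').add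
      (hasDerivAt_const B (2 * (s - 1) * xlog A))).add
      (hasDerivAt_const B ((s - 1) / s * xlog (r * s - r - s - s * A)))).sub
      (hxa (fun x => x - G) 1 (-G) B (fun x => by ring) pos4.ne')).sub
      (hasDerivAt_const B (xlog D))).sub
      (hasDerivAt_const B (2 * xlog G))).sub
      ((hxa (fun x => A - x - D) (-1) (A - D) B (fun x => by ring) pos7.ne').const_mul 2)).sub
      (hxa (fun x => (s - 3) * A + x + D) 1 ((s - 3) * A + D) B (fun x => by ring) pos8.ne')).sub
      (hxa (fun x => 1 - A - x - G) (-1) (1 - A - G) B (fun x => by ring) pos9.ne')).add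
      (hasDerivAt_const B (A * Real.log (kap1 r s)))).add
      (hasDerivAt_mul_const (Real.log (kap2 r s)))).add
      (hasDerivAt_const B (G * Real.log (kap3 r s)))).add
      (hasDerivAt_const B (D * Real.log (kap4 r)))
  have e2 := hd2.deriv.symm.trans h2
  have hd3 : HasDerivAt (fun x => phiRS r s A B x D)
      (0 + 0 + 0
        - (Real.log (B - G) + 1) * (-1)
        - 0
        - 2 * ((Real.log G + 1) * 1)
        - 0 - 0
        - (Real.log (1 - A - B - G) + 1) * (-1)
        + 0 + 0 + Real.log (kap3 r s) + 0) G := by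
    exact ((((((((((((hasDerivAt_const G (xlog (1 - A - B))).add
      (hasDerivAt_const G (2 * (s - 1) * xlog A))).add
      (hasDerivAt_const G ((s - 1) / s * xlog (r * s - r - s - s * A)))).sub
      (hxa (fun x => B - x) (-1) B G (fun x => by ring) pos4.ne')).sub
      (hasDerivAt_const G (xlog D))).sub
      ((hxa (fun x => x) 1 0 G (fun x => by ring) pos6.ne').const_mul 2)).sub
      (hasDerivAt_const G (2 * xlog (A - B - D)))).sub
      (hasDerivAt_const G (xlog ((s - 3) * A + B + D)))).sub
      (hxa (fun x => 1 - A - B - x) (-1) (1 - A - B) G (fun x => by ring) pos9.ne')).add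
      (hasDerivAt_const G (A * Real.log (kap1 r s)))).add
      (hasDerivAt_const G (B * Real.log (kap2 r s)))).add
      (hasDerivAt_mul_const (Real.log (kap3 r s)))).add
      (hasDerivAt_const G (D * Real.log (kap4 r)))
  have e3 := hd3.deriv.symm.trans h3
  have hd4 : HasDerivAt (fun x => phiRS r s A B G x)
      (0 + 0 + 0
        - 0
        - (Real.log D + 1) * 1
        - 0
        - 2 * ((Real.log (A - B - D) + 1) * (-1))
        - (Real.log ((s - 3) * A + B + D) + 1) * 1
        - 0
        + 0 + 0 + 0 + Real.log (kap4 r)) D := by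
    exact ((((((((((((hasDerivAt_const D (xlog (1 - A - B))).add
      (hasDerivAt_const D (2 * (s - 1) * xlog A))).add
      (hasDerivAt_const D ((s - 1) / s * xlog (r * s - r - s - s * A)))).sub
      (hasDerivAt_const D (xlog (B - G)))).sub
      (hxa (fun x => x) 1 0 D (fun x => by ring) pos5.ne')).sub
      (hasDerivAt_const D (2 * xlog G))).sub
      ((hxa (fun x => A - B - x) (-1) (A - B) D (fun x => by ring) pos7.ne').const_mul 2)).sub
      (hxa (fun x => (s - 3) * A + B + x) 1 ((s - 3) * A + B) D (fun x => by ring) pos8.ne')).sub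
      (hasDerivAt_const D (xlog (1 - A - B - G)))).add
      (hasDerivAt_const D (A * Real.log (kap1 r s)))).add
      (hasDerivAt_const D (B * Real.log (kap2 r s)))).add
      (hasDerivAt_const D (G * Real.log (kap3 r s)))).add
      (hasDerivAt_mul_const (Real.log (kap4 r)))
  have e4 := hd4.deriv.symm.trans h4
  have hw : (s - 1) / s * s = s - 1 := div_mul_cancel₀ _ hs0
  have hL : Real.log (1 - A - B) = Real.log τ + Real.log (1 - A - B - G) := by
    have h := Real.log_mul hτ0.ne' pos9.ne'
    rw [← hrel] at h; exact h
  simp only [phiRS, xlog]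
  linear_combination A * e1 + B * e2 + G * e3 + D * e4 + hL + A * hw

set_option maxHeartbeats 1000000 in
theorem stmt_17 (r s : ℤ) (hs : 3 ≤ s) (hr : s + 1 ≤ r) (τ : ℝ) (hτ : 1 < τ)
    (h1 : deriv (fun x => phiRS r s x (betaT r s τ) (gammaT r s τ) (deltaT r s τ))
        (alphaT r s τ) = 0)
    (h2 : deriv (fun x => phiRS r s (alphaT r s τ) x (gammaT r s τ) (deltaT r s τ))
        (betaT r s τ) = 0)
    (h3 : deriv (fun x => phiRS r s (alphaT r s τ) (betaT r s τ) x (deltaT r s τ))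
        (gammaT r s τ) = 0)
    (h4 : deriv (fun x => phiRS r s (alphaT r s τ) (betaT r s τ) (gammaT r s τ) x)
        (deltaT r s τ) = 0) :
    phiRS r s (alphaT r s τ) (betaT r s τ) (gammaT r s τ) (deltaT r s τ) =
      Real.log τ + (((s : ℝ) - 1) / (s : ℝ)) * ((r : ℝ) * s - r - s) *
        Real.log ((r : ℝ) * s - r - s - (s : ℝ) * alphaT r s τ) := by
  have hsR : (3:ℝ) ≤ (s:ℝ) := by exact_mod_cast hs
  have hrR : (s:ℝ) + 1 ≤ (r:ℝ) := by exact_mod_cast hr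
  have hs0 : (s:ℝ) ≠ 0 := by intro h; rw [h] at hsR; norm_num at hsR
  have hτ0 : (0:ℝ) < τ := by linarith
  have hτ1 : (0:ℝ) < τ - 1 := by linarith
  have a1 : (0:ℝ) < (r:ℝ) - 2 := by linarith
  have a2 : (0:ℝ) ≤ (s:ℝ) - 2 := by linarith
  have a3 : (0:ℝ) ≤ (s:ℝ) - 3 := by linarith
  have a4 : (0:ℝ) < (r:ℝ) - 1 := by linarith
  have hh : 0 < hRS (r:ℝ) (s:ℝ) := by
    have t1 : 0 < ((r:ℝ) - 2) ^ 2 := pow_pos a1 2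
    have t2 : 0 ≤ 2 * ((s:ℝ) - 2) * ((r:ℝ) - 1) * ((r:ℝ) - 2) :=
      mul_nonneg (mul_nonneg (mul_nonneg (by norm_num) a2) a4.le) a1.le
    have t3 : 0 ≤ 1 / 2 * ((s:ℝ) - 2) * ((s:ℝ) - 3) * ((r:ℝ) - 1) ^ 2 :=
      mul_nonneg (mul_nonneg (mul_nonneg (by norm_num) a2) a3) (sq_nonneg _)
    unfold hRS; linarith
  have hm : 0 < (r:ℝ) * (s:ℝ) - (r:ℝ) - (s:ℝ) := by
    nlinarith [mul_le_mul_of_nonneg_right hrR (by linarith : (0:ℝ) ≤ (s:ℝ) - 1), sq_nonneg ((s:ℝ) - 3)]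
  have hk4 : 0 < kap4 (r:ℝ) := div_pos (by linarith) (by linarith)
  have hk2 : 0 < kap2 (r:ℝ) (s:ℝ) := div_pos (by linarith) (pow_pos a1 2)
  have hk3 : 0 < kap3 (r:ℝ) (s:ℝ) := div_pos (pow_pos hm 2) hh
  have hDt : 0 < DT (r:ℝ) (s:ℝ) τ := by
    have := mul_pos hk3 (by linarith : (0:ℝ) < 2 * τ - 1)
    unfold DT; nlinarith [sq_nonneg (τ - 1)]
  have hp : 0 < pT (r:ℝ) (s:ℝ) τ :=
    div_pos (by nlinarith [mul_pos hk3 hτ1, sq_nonneg (τ - 1)]) hDt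
  have hq : 0 < qT (r:ℝ) (s:ℝ) τ :=
    div_pos (mul_pos (mul_pos hk4 hτ0) (pow_pos hτ1 2)) (mul_pos hk2 hDt)
  have hS : 0 < Real.sqrt ((((s:ℝ) - 2) / kap4 (r:ℝ)) * qT (r:ℝ) (s:ℝ) τ * (pT (r:ℝ) (s:ℝ) τ + qT (r:ℝ) (s:ℝ) τ) +
      (((s:ℝ) - 3) ^ 2 / (4 * (kap4 (r:ℝ)) ^ 2)) * (qT (r:ℝ) (s:ℝ) τ) ^ 2) := by
    apply Real.sqrt_pos.mpr
    have t1 : 0 < ((s:ℝ) - 2) / kap4 (r:ℝ) * qT (r:ℝ) (s:ℝ) τ * (pT (r:ℝ) (s:ℝ) τ + qT (r:ℝ) (s:ℝ) τ) :=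
      mul_pos (mul_pos (div_pos (by linarith) hk4) hq) (by linarith)
    have t2 : 0 ≤ ((s:ℝ) - 3) ^ 2 / (4 * (kap4 (r:ℝ)) ^ 2) * (qT (r:ℝ) (s:ℝ) τ) ^ 2 := by positivity
    linarith
  have hwq : 0 ≤ ((s:ℝ) - 3) / (2 * kap4 (r:ℝ)) * qT (r:ℝ) (s:ℝ) τ :=
    mul_nonneg (div_nonneg a3 (by linarith)) hq.le
  have hN : 0 < NT (r:ℝ) (s:ℝ) τ := by unfold NT; linarith
  have hNd : 0 < 1 + NT (r:ℝ) (s:ℝ) τ := by linarith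
  have hA : 0 < alphaT (r:ℝ) (s:ℝ) τ := div_pos hN hNd
  have hA1 : alphaT (r:ℝ) (s:ℝ) τ < 1 := by
    unfold alphaT; rw [div_lt_one hNd]; linarith
  have h1A : 0 < 1 - alphaT (r:ℝ) (s:ℝ) τ := by linarith
  have hAN : alphaT (r:ℝ) (s:ℝ) τ = NT (r:ℝ) (s:ℝ) τ * (1 - alphaT (r:ℝ) (s:ℝ) τ) := by
    unfold alphaT; field_simp; ring
  -- identities
  have h1p : 1 - pT (r:ℝ) (s:ℝ) τ = kap3 (r:ℝ) (s:ℝ) * τ / DT (r:ℝ) (s:ℝ) τ := by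
    unfold pT; field_simp; unfold DT; ring
  have h2p : 1 - pT (r:ℝ) (s:ℝ) τ - kap3 (r:ℝ) (s:ℝ) * (τ - 1) / DT (r:ℝ) (s:ℝ) τ = kap3 (r:ℝ) (s:ℝ) / DT (r:ℝ) (s:ℝ) τ := by
    unfold pT; field_simp; unfold DT; ring
  have h3p : pT (r:ℝ) (s:ℝ) τ - kap3 (r:ℝ) (s:ℝ) * (τ - 1) / DT (r:ℝ) (s:ℝ) τ = (τ - 1) ^ 2 / DT (r:ℝ) (s:ℝ) τ := by
    unfold pT; field_simp; ring
  have I1 : 1 - alphaT (r:ℝ) (s:ℝ) τ - betaT (r:ℝ) (s:ℝ) τ = kap3 (r:ℝ) (s:ℝ) * τ / DT (r:ℝ) (s:ℝ) τ * (1 - alphaT (r:ℝ) (s:ℝ) τ) := by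
    unfold betaT; linear_combination (1 - alphaT (r:ℝ) (s:ℝ) τ) * h1p
  have I2 : 1 - alphaT (r:ℝ) (s:ℝ) τ - betaT (r:ℝ) (s:ℝ) τ - gammaT (r:ℝ) (s:ℝ) τ
      = kap3 (r:ℝ) (s:ℝ) / DT (r:ℝ) (s:ℝ) τ * (1 - alphaT (r:ℝ) (s:ℝ) τ) := by
    unfold betaT gammaT; linear_combination (1 - alphaT (r:ℝ) (s:ℝ) τ) * h2p
  have I3 : betaT (r:ℝ) (s:ℝ) τ - gammaT (r:ℝ) (s:ℝ) τ = (τ - 1) ^ 2 / DT (r:ℝ) (s:ℝ) τ * (1 - alphaT (r:ℝ) (s:ℝ) τ) := by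
    unfold betaT gammaT; linear_combination (1 - alphaT (r:ℝ) (s:ℝ) τ) * h3p
  have I4 : alphaT (r:ℝ) (s:ℝ) τ - betaT (r:ℝ) (s:ℝ) τ - deltaT (r:ℝ) (s:ℝ) τ =
      (((s:ℝ) - 3) / (2 * kap4 (r:ℝ)) * qT (r:ℝ) (s:ℝ) τ +
        Real.sqrt ((((s:ℝ) - 2) / kap4 (r:ℝ)) * qT (r:ℝ) (s:ℝ) τ * (pT (r:ℝ) (s:ℝ) τ + qT (r:ℝ) (s:ℝ) τ) +
          (((s:ℝ) - 3) ^ 2 / (4 * (kap4 (r:ℝ)) ^ 2)) * (qT (r:ℝ) (s:ℝ) τ) ^ 2)) * (1 - alphaT (r:ℝ) (s:ℝ) τ) := by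
    have hNdef : NT (r:ℝ) (s:ℝ) τ = pT (r:ℝ) (s:ℝ) τ + qT (r:ℝ) (s:ℝ) τ + (((s:ℝ) - 3) / (2 * kap4 (r:ℝ))) * qT (r:ℝ) (s:ℝ) τ +
        Real.sqrt ((((s:ℝ) - 2) / kap4 (r:ℝ)) * qT (r:ℝ) (s:ℝ) τ * (pT (r:ℝ) (s:ℝ) τ + qT (r:ℝ) (s:ℝ) τ) +
          (((s:ℝ) - 3) ^ 2 / (4 * (kap4 (r:ℝ)) ^ 2)) * (qT (r:ℝ) (s:ℝ) τ) ^ 2) := rfl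
    unfold betaT deltaT
    linear_combination hAN + (1 - alphaT (r:ℝ) (s:ℝ) τ) * hNdef
  -- positivity of arguments
  have pos2 : 0 < 1 - alphaT (r:ℝ) (s:ℝ) τ - betaT (r:ℝ) (s:ℝ) τ := by
    rw [I1]; exact mul_pos (div_pos (mul_pos hk3 hτ0) hDt) h1A
  have pos9 : 0 < 1 - alphaT (r:ℝ) (s:ℝ) τ - betaT (r:ℝ) (s:ℝ) τ - gammaT (r:ℝ) (s:ℝ) τ := by
    rw [I2]; exact mul_pos (div_pos hk3 hDt) h1A
  have pos4 : 0 < betaT (r:ℝ) (s:ℝ) τ - gammaT (r:ℝ) (s:ℝ) τ := by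
    rw [I3]; exact mul_pos (div_pos (pow_pos hτ1 2) hDt) h1A
  have pos7 : 0 < alphaT (r:ℝ) (s:ℝ) τ - betaT (r:ℝ) (s:ℝ) τ - deltaT (r:ℝ) (s:ℝ) τ := by
    rw [I4]; exact mul_pos (by linarith) h1A
  have hB : 0 < betaT (r:ℝ) (s:ℝ) τ := mul_pos hp h1A
  have hG : 0 < gammaT (r:ℝ) (s:ℝ) τ := mul_pos (div_pos (mul_pos hk3 hτ1) hDt) h1A
  have hDl : 0 < deltaT (r:ℝ) (s:ℝ) τ := mul_pos hq h1A
  have pos8 : 0 < ((s:ℝ) - 3) * alphaT (r:ℝ) (s:ℝ) τ + betaT (r:ℝ) (s:ℝ) τ + deltaT (r:ℝ) (s:ℝ) τ := by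
    nlinarith [mul_nonneg a3 hA.le]
  have pos3 : 0 < (r:ℝ) * (s:ℝ) - (r:ℝ) - (s:ℝ) - s * alphaT (r:ℝ) (s:ℝ) τ := by
    nlinarith [mul_le_mul_of_nonneg_right hrR (by linarith : (0:ℝ) ≤ (s:ℝ) - 1),
      mul_lt_mul_of_pos_left hA1 (by linarith : (0:ℝ) < (s:ℝ)), sq_nonneg ((s:ℝ) - 3)]
  have hrel : 1 - alphaT (r:ℝ) (s:ℝ) τ - betaT (r:ℝ) (s:ℝ) τ
      = τ * (1 - alphaT (r:ℝ) (s:ℝ) τ - betaT (r:ℝ) (s:ℝ) τ - gammaT (r:ℝ) (s:ℝ) τ) := by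
    linear_combination I1 - τ * I2
  exact auxPhi (r:ℝ) (s:ℝ) τ _ _ _ _ hs0 hA pos2 pos3 pos4 hDl hG pos7 pos8 pos9
    hτ0 hrel h1 h2 h3 h4
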